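/- arXiv:2305.07156 — 2 statements merged into one kernel-verified Lean document; each statement's English description precedes it below -/
import Mathlib

section
/- For every integer n ≥ 1 and every d ∈ [0,1], C_n(d) ≤ Σ_{k=1}^{n} C(n,k)·d^{n−k}·(1−d)^k·C_{n,k}, where C(n,k) denotes the binomial coefficient. -/
open Finset

/-- Mutual information of a joint distribution `q` on `α × β`, where the output
marginal is supported inside the finite set `Ys`. Terms with zero joint
probability vanish since they are multiplied by `q x y = 0`. -/
noncomputable def MI {α : Type*} [Fintype α] {β : Type*} [DecidableEq β]
    (q : α → β → ℝ) (Ys : Finset β) : ℝ :=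
  ∑ x : α, ∑ y ∈ Ys, q x y *
    Real.logb 2 (q x y / ((∑ y' ∈ Ys, q x y') * (∑ x' : α, q x' y)))

/-- `p` is a probability distribution on the finite type `α`. -/
def IsDist {α : Type*} [Fintype α] (p : α → ℝ) : Prop :=
  (∀ a, 0 ≤ p a) ∧ ∑ a : α, p a = 1

/-- The subsequence of `x` obtained by keeping exactly the positions in `S`. -/
def delOutput {n : ℕ} (x : Fin n → Bool) (S : Finset (Fin n)) : List Bool :=
  (S.sort (· ≤ ·)).map x

/-- All binary strings of length at most `n`. -/
def listsUpTo (n : ℕ) : Finset (List Bool) :=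
  (Finset.range (n + 1)).biUnion
    (fun k => Finset.image (fun v : Fin k → Bool => List.ofFn v) Finset.univ)

/-- Transition probability of the binary deletion channel `W_n^d`:
each bit is deleted independently with probability `d`. -/
noncomputable def Wdel (n : ℕ) (d : ℝ) (x : Fin n → Bool) (y : List Bool) : ℝ :=
  ∑ S : Finset (Fin n),
    if delOutput x S = y then (1 - d) ^ S.card * d ^ (n - S.card) else 0

/-- `C_n(d)`: the supremum of `I(X;Y)` over input distributions on `{0,1}^n`,
where `Y` is the output of the deletion channel `W_n^d` on input `X`. -/
noncomputable def Cdel (n : ℕ) (d : ℝ) : ℝ :=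
  sSup { r | ∃ p : (Fin n → Bool) → ℝ, IsDist p ∧
    r = MI (fun x y => p x * Wdel n d x y) (listsUpTo n) }

/-- Transition probability of the channel `W_{n,k}` which keeps a uniformly
random `k`-element subset of the `n` positions. -/
noncomputable def Wnk (n k : ℕ) (x : Fin n → Bool) (y : List Bool) : ℝ :=
  (∑ S ∈ Finset.powersetCard k (Finset.univ : Finset (Fin n)),
      if delOutput x S = y then (1 : ℝ) else 0) / (n.choose k : ℝ)

/-- `C_{n,k}`: the supremum of `I(X;Y)` over input distributions on `{0,1}^n`,
where `Y` is the output of `W_{n,k}` on input `X`. -/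
noncomputable def Cnk (n k : ℕ) : ℝ :=
  sSup { r | ∃ p : (Fin n → Bool) → ℝ, IsDist p ∧
    r = MI (fun x y => p x * Wnk n k x y) (listsUpTo n) }


lemma gibbs_aux {a b : ℝ} (ha : 0 ≤ a) (hb : 0 ≤ b) (hab : 0 < a → 0 < b) :
    a - b ≤ a * Real.log (a / b) := by
  rcases ha.eq_or_lt with h | h
  · simp [← h]; linarith
  · have hb' := hab h
    have h1 : Real.log (b / a) ≤ b / a - 1 := Real.log_le_sub_one_of_pos (by positivity)
    have h2 : Real.log (a / b) = - Real.log (b / a) := by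
      rw [← Real.log_inv]
      congr 1
      field_simp
    rw [h2]
    have h3 : a * (b / a - 1) = b - a := by field_simp
    nlinarith [mul_le_mul_of_nonneg_left h1 ha]

lemma delOutput_length {n : ℕ} (x : Fin n → Bool) (S : Finset (Fin n)) :
    (delOutput x S).length = S.card := by
  simp [delOutput]

lemma mem_listsUpTo {n : ℕ} {l : List Bool} (h : l.length ≤ n) : l ∈ listsUpTo n := by
  simp only [listsUpTo, Finset.mem_biUnion, Finset.mem_range, Finset.mem_image, Finset.mem_univ]
  exact ⟨l.length, Nat.lt_succ_of_le h, l.get, ⟨trivial, List.ofFn_get l⟩⟩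

lemma Wnk_nonneg (n k : ℕ) (x : Fin n → Bool) (y : List Bool) : 0 ≤ Wnk n k x y := by
  unfold Wnk
  apply div_nonneg _ (by positivity)
  apply Finset.sum_nonneg
  intro S _
  positivity

lemma sum_Wnk {n k : ℕ} (hk : k ≤ n) (x : Fin n → Bool) :
    ∑ y ∈ listsUpTo n, Wnk n k x y = 1 := by
  unfold Wnk
  rw [← Finset.sum_div, Finset.sum_comm]
  have h1 : ∀ S ∈ Finset.powersetCard k (Finset.univ : Finset (Fin n)),
      (∑ y ∈ listsUpTo n, if delOutput x S = y then (1:ℝ) else 0) = 1 := by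
    intro S hS
    rw [Finset.sum_ite_eq]
    have : (delOutput x S).length ≤ n := by
      rw [delOutput_length, (Finset.mem_powersetCard.mp hS).2]; exact hk
    simp [mem_listsUpTo this]
  rw [Finset.sum_congr rfl h1]
  have hpos : (0:ℝ) < (n.choose k : ℝ) := by exact_mod_cast Nat.choose_pos hk
  simp [Finset.card_powersetCard]
  exact (Nat.choose_pos hk).ne'

lemma Wdel_eq_sum (n : ℕ) (d : ℝ) (x : Fin n → Bool) (y : List Bool) :
    Wdel n d x y = ∑ k ∈ Finset.range (n+1),
      ((n.choose k : ℝ) * d ^ (n - k) * (1 - d) ^ k) * Wnk n k x y := by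
  unfold Wdel
  rw [← Finset.powerset_univ, Finset.sum_powerset]
  simp only [Finset.card_univ, Fintype.card_fin]
  refine Finset.sum_congr rfl fun k hk => ?_
  have hk' : k ≤ n := Nat.lt_succ_iff.mp (Finset.mem_range.mp hk)
  have hpos : (0:ℝ) < (n.choose k : ℝ) := by exact_mod_cast Nat.choose_pos hk'
  unfold Wnk
  rw [← mul_div_assoc, eq_div_iff hpos.ne', Finset.sum_mul, Finset.mul_sum]
  refine Finset.sum_congr rfl fun S hS => ?_
  have hcard : S.card = k := (Finset.mem_powersetCard.mp hS).2
  by_cases h : delOutput x S = y <;> simp [h, hcard] <;> ring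

lemma MI_le_bound {α : Type*} [Fintype α] {β : Type*} [DecidableEq β]
    (q : α → β → ℝ) (Ys : Finset β) (hq : ∀ x y, 0 ≤ q x y) :
    MI q Ys ≤ 2 * Fintype.card α := by
  have hlog2 : (0:ℝ) < Real.log 2 := Real.log_pos (by norm_num)
  unfold MI
  have hx : ∀ x : α, ∑ y ∈ Ys, q x y *
      Real.logb 2 (q x y / ((∑ y' ∈ Ys, q x y') * (∑ x' : α, q x' y))) ≤ 2 := by
    intro x
    set r := ∑ y' ∈ Ys, q x y' with hr
    have hr0 : 0 ≤ r := Finset.sum_nonneg fun y _ => hq x y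
    rcases hr0.eq_or_lt with h0 | hrpos
    · have hz : ∀ y ∈ Ys, q x y = 0 :=
        (Finset.sum_eq_zero_iff_of_nonneg (fun y _ => hq x y)).mp h0.symm
      rw [Finset.sum_eq_zero (fun y hy => by rw [hz y hy]; ring)]
      norm_num
    · have step : ∀ y ∈ Ys, q x y *
          Real.logb 2 (q x y / (r * (∑ x' : α, q x' y))) ≤ q x y * (- Real.logb 2 r) := by
        intro y hy
        rcases (hq x y).eq_or_lt with h0 | hqpos
        · rw [← h0]; ring_nf; exact le_refl _
        · have hc : q x y ≤ ∑ x' : α, q x' y :=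
            Finset.single_le_sum (fun x' _ => hq x' y) (Finset.mem_univ x)
          have hcpos : 0 < ∑ x' : α, q x' y := lt_of_lt_of_le hqpos hc
          apply mul_le_mul_of_nonneg_left _ (le_of_lt hqpos)
          rw [← Real.logb_inv]
          apply Real.logb_le_logb_of_le (by norm_num) (by positivity)
          rw [div_le_iff₀ (by positivity), inv_mul_eq_div, le_div_iff₀ hrpos]
          nlinarith
      calc ∑ y ∈ Ys, q x y * Real.logb 2 (q x y / (r * (∑ x' : α, q x' y)))
          ≤ ∑ y ∈ Ys, q x y * (- Real.logb 2 r) := Finset.sum_le_sum step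
        _ = r * (- Real.logb 2 r) := by rw [← Finset.sum_mul]
        _ ≤ 2 := by
            have h1 : Real.log r⁻¹ ≤ r⁻¹ - 1 := Real.log_le_sub_one_of_pos (by positivity)
            have h2 : Real.log r⁻¹ = - Real.log r := Real.log_inv r
            have h3 : r * (- Real.log r) ≤ 1 := by
              have := mul_le_mul_of_nonneg_left h1 hrpos.le
              rw [h2] at this
              have h4 : r * (r⁻¹ - 1) = 1 - r := by field_simp
              nlinarith
            have h5 : (0.5:ℝ) < Real.log 2 := by have := Real.log_two_gt_d9; linarith
            rw [Real.logb]
            rw [div_eq_mul_inv]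
            have h6 : r * -(Real.log r * (Real.log 2)⁻¹) = (r * (- Real.log r)) * (Real.log 2)⁻¹ := by ring
            rw [h6]
            calc (r * (- Real.log r)) * (Real.log 2)⁻¹ ≤ 1 * (Real.log 2)⁻¹ := by
                  apply mul_le_mul_of_nonneg_right h3 (by positivity)
              _ ≤ 2 := by
                  rw [one_mul, inv_le_comm₀ (by linarith) (by norm_num)]
                  linarith
  calc ∑ x : α, _ ≤ ∑ _x : α, (2:ℝ) := Finset.sum_le_sum fun x _ => hx x
    _ = 2 * Fintype.card α := by rw [Finset.sum_const]; simp [mul_comm]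

lemma Wnk_zero (n : ℕ) (x : Fin n → Bool) (y : List Bool) :
    Wnk n 0 x y = if ([] : List Bool) = y then 1 else 0 := by
  rw [Wnk, Finset.powersetCard_zero, Finset.sum_singleton]
  have : delOutput x (∅ : Finset (Fin n)) = [] := by simp [delOutput]
  rw [this]
  simp [eq_comm]

lemma MI_k0 (n : ℕ) (p : (Fin n → Bool) → ℝ) (hp : IsDist p) :
    MI (fun x y => p x * Wnk n 0 x y) (listsUpTo n) = 0 := by
  unfold MI
  refine Finset.sum_eq_zero fun x _ => Finset.sum_eq_zero fun y hy => ?_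
  simp only [Wnk_zero]
  by_cases h : ([] : List Bool) = y
  · subst h
    have h1 : ∑ y' ∈ listsUpTo n, p x * (if ([] : List Bool) = y' then (1:ℝ) else 0) = p x := by
      rw [← Finset.mul_sum, Finset.sum_ite_eq]
      simp [mem_listsUpTo (by simp : ([] : List Bool).length ≤ n)]
    have h2 : ∑ x' : Fin n → Bool, p x' * (if ([] : List Bool) = ([] : List Bool) then (1:ℝ) else 0)
        = 1 := by simp [hp.2]
    rw [h1, h2, if_pos rfl, mul_one]
    rcases (hp.1 x).eq_or_lt with h0 | h0
    · rw [← h0]; ring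
    · rw [div_self h0.ne', Real.logb_one, mul_zero]
  · simp [h]

lemma genie {α : Type*} [Fintype α] {β : Type*} [DecidableEq β]
    (Ys : Finset β) (K : Finset ℕ) (w : ℕ → ℝ) (p : α → ℝ)
    (q : α → β → ℝ) (qk : ℕ → α → β → ℝ)
    (hw : ∀ k ∈ K, 0 ≤ w k) (hp : ∀ x, 0 ≤ p x)
    (hqk0 : ∀ k ∈ K, ∀ x y, 0 ≤ qk k x y)
    (hqsum : ∀ x y, q x y = ∑ k ∈ K, w k * qk k x y)
    (hrow : ∀ x, ∑ y ∈ Ys, q x y = p x)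
    (hrowk : ∀ k ∈ K, ∀ x, ∑ y ∈ Ys, qk k x y = p x) :
    MI q Ys ≤ ∑ k ∈ K, w k * MI (qk k) Ys := by
  have hlog2 : (0:ℝ) < Real.log 2 := Real.log_pos (by norm_num)
  have hq0 : ∀ x y, 0 ≤ q x y := fun x y => (hqsum x y) ▸
    Finset.sum_nonneg fun k hk => mul_nonneg (hw k hk) (hqk0 k hk x y)
  have hc0 : ∀ y, 0 ≤ ∑ x' : α, q x' y := fun y => Finset.sum_nonneg fun x _ => hq0 x y
  have hck0 : ∀ k ∈ K, ∀ y, 0 ≤ ∑ x' : α, qk k x' y :=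
    fun k hk y => Finset.sum_nonneg fun x _ => hqk0 k hk x y
  have hMIq : MI q Ys = ∑ x : α, ∑ y ∈ Ys,
      q x y * Real.logb 2 (q x y / (p x * ∑ x' : α, q x' y)) := by
    unfold MI
    exact Finset.sum_congr rfl fun x _ => Finset.sum_congr rfl fun y _ => by rw [hrow x]
  have hMIqk : ∀ k ∈ K, MI (qk k) Ys = ∑ x : α, ∑ y ∈ Ys,
      qk k x y * Real.logb 2 (qk k x y / (p x * ∑ x' : α, qk k x' y)) := by
    intro k hk
    unfold MI
    exact Finset.sum_congr rfl fun x _ => Finset.sum_congr rfl fun y _ => by rw [hrowk k hk x]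
  -- pointwise inequality
  have main : ∑ k ∈ K, ∑ x : α, ∑ y ∈ Ys,
      ((w k * qk k x y - w k * q x y * (∑ x' : α, qk k x' y) / (∑ x' : α, q x' y)) / Real.log 2)
      ≤ ∑ k ∈ K, ∑ x : α, ∑ y ∈ Ys,
      (w k * (qk k x y * Real.logb 2 (qk k x y / (p x * ∑ x' : α, qk k x' y))
            - qk k x y * Real.logb 2 (q x y / (p x * ∑ x' : α, q x' y)))) := by
    refine Finset.sum_le_sum fun k hk => Finset.sum_le_sum fun x _ =>
      Finset.sum_le_sum fun y hy => ?_
    have hb0 : 0 ≤ w k * q x y * (∑ x' : α, qk k x' y) / (∑ x' : α, q x' y) :=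
      div_nonneg (mul_nonneg (mul_nonneg (hw k hk) (hq0 x y)) (hck0 k hk y)) (hc0 y)
    rcases (mul_nonneg (hw k hk) (hqk0 k hk x y)).eq_or_lt with h0 | ha
    · have hr : w k * (qk k x y * Real.logb 2 (qk k x y / (p x * ∑ x' : α, qk k x' y))
            - qk k x y * Real.logb 2 (q x y / (p x * ∑ x' : α, q x' y)))
          = (w k * qk k x y) * (Real.logb 2 (qk k x y / (p x * ∑ x' : α, qk k x' y))
            - Real.logb 2 (q x y / (p x * ∑ x' : α, q x' y))) := by ring
      rw [hr, ← h0, zero_mul]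
      apply div_nonpos_of_nonpos_of_nonneg _ hlog2.le
      linarith
    · -- positivity of everything
      have hwk : 0 < w k := by
        rcases (hw k hk).eq_or_lt with h | h
        · exfalso; rw [← h, zero_mul] at ha; exact lt_irrefl 0 ha
        · exact h
      have hA : 0 < qk k x y := by
        rcases (hqk0 k hk x y).eq_or_lt with h | h
        · exfalso; rw [← h, mul_zero] at ha; exact lt_irrefl 0 ha
        · exact h
      have hP : 0 < p x := by
        rw [← hrowk k hk x]
        exact lt_of_lt_of_le hA (Finset.single_le_sum (fun y' _ => hqk0 k hk x y') hy)
      have hQ : 0 < q x y := by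
        rw [hqsum]
        exact lt_of_lt_of_le ha (Finset.single_le_sum
          (fun k' hk' => mul_nonneg (hw k' hk') (hqk0 k' hk' x y)) hk)
      have hC : 0 < ∑ x' : α, q x' y :=
        lt_of_lt_of_le hQ (Finset.single_le_sum (fun x' _ => hq0 x' y) (Finset.mem_univ x))
      have hCk : 0 < ∑ x' : α, qk k x' y :=
        lt_of_lt_of_le hA (Finset.single_le_sum (fun x' _ => hqk0 k hk x' y) (Finset.mem_univ x))
      have hb : 0 < w k * q x y * (∑ x' : α, qk k x' y) / (∑ x' : α, q x' y) := by positivity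
      have hgibbs := gibbs_aux (le_of_lt ha) (le_of_lt hb) (fun _ => hb)
      have hab : (w k * qk k x y) / (w k * q x y * (∑ x' : α, qk k x' y) / (∑ x' : α, q x' y))
          = (qk k x y / (p x * ∑ x' : α, qk k x' y)) / (q x y / (p x * ∑ x' : α, q x' y)) := by
        field_simp
      have hL : Real.logb 2 (qk k x y / (p x * ∑ x' : α, qk k x' y))
            - Real.logb 2 (q x y / (p x * ∑ x' : α, q x' y))
          = Real.log ((w k * qk k x y) /
              (w k * q x y * (∑ x' : α, qk k x' y) / (∑ x' : α, q x' y))) / Real.log 2 := by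
        rw [hab, Real.logb, Real.logb, div_sub_div_same, ← Real.log_div (by positivity) (by positivity)]
      have hr : w k * (qk k x y * Real.logb 2 (qk k x y / (p x * ∑ x' : α, qk k x' y))
            - qk k x y * Real.logb 2 (q x y / (p x * ∑ x' : α, q x' y)))
          = (w k * qk k x y) * (Real.logb 2 (qk k x y / (p x * ∑ x' : α, qk k x' y))
            - Real.logb 2 (q x y / (p x * ∑ x' : α, q x' y))) := by ring
      rw [hr, hL, ← mul_div_assoc]
      exact (div_le_div_iff_of_pos_right hlog2).mpr hgibbs
  -- summation part
  have reorder : ∀ (F : ℕ → α → β → ℝ), ∑ k ∈ K, ∑ x : α, ∑ y ∈ Ys, F k x y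
      = ∑ y ∈ Ys, ∑ k ∈ K, ∑ x : α, F k x y := by
    intro F
    calc ∑ k ∈ K, ∑ x : α, ∑ y ∈ Ys, F k x y
        = ∑ k ∈ K, ∑ y ∈ Ys, ∑ x : α, F k x y :=
          Finset.sum_congr rfl fun k _ => Finset.sum_comm
      _ = ∑ y ∈ Ys, ∑ k ∈ K, ∑ x : α, F k x y := Finset.sum_comm
  have key : ∀ y ∈ Ys, (∑ k ∈ K, ∑ x : α, w k * qk k x y)
      = ∑ k ∈ K, ∑ x : α, w k * q x y * (∑ x' : α, qk k x' y) / (∑ x' : α, q x' y) := by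
    intro y hy
    have lhs : (∑ k ∈ K, ∑ x : α, w k * qk k x y) = ∑ x : α, q x y := by
      rw [Finset.sum_comm]
      exact Finset.sum_congr rfl fun x _ => (hqsum x y).symm
    rw [lhs]
    rcases (hc0 y).eq_or_lt with h0 | h0
    · have hz : ∀ x : α, q x y = 0 := fun x =>
        (Finset.sum_eq_zero_iff_of_nonneg (fun x' _ => hq0 x' y)).mp h0.symm x (Finset.mem_univ x)
      rw [Finset.sum_eq_zero fun x _ => hz x]
      symm
      refine Finset.sum_eq_zero fun k _ => Finset.sum_eq_zero fun x _ => ?_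
      rw [hz x, mul_zero, zero_mul, zero_div]
    · symm
      calc ∑ k ∈ K, ∑ x : α, w k * q x y * (∑ x' : α, qk k x' y) / (∑ x' : α, q x' y)
          = ∑ k ∈ K, w k * ∑ x' : α, qk k x' y := by
            refine Finset.sum_congr rfl fun k hk => ?_
            have e : ∀ x : α, w k * q x y * (∑ x' : α, qk k x' y) / (∑ x' : α, q x' y)
                = (w k * (∑ x' : α, qk k x' y) / (∑ x' : α, q x' y)) * q x y := fun x => by ring
            rw [Finset.sum_congr rfl fun x _ => e x, ← Finset.mul_sum,
              div_mul_cancel₀ _ h0.ne']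
        _ = ∑ x : α, q x y := by
            calc ∑ k ∈ K, w k * ∑ x' : α, qk k x' y
                = ∑ k ∈ K, ∑ x' : α, w k * qk k x' y :=
                  Finset.sum_congr rfl fun k _ => Finset.mul_sum _ _ _
              _ = ∑ x' : α, ∑ k ∈ K, w k * qk k x' y := Finset.sum_comm
              _ = ∑ x : α, q x y := Finset.sum_congr rfl fun x _ => (hqsum x y).symm
  have hS : (∑ k ∈ K, ∑ x : α, ∑ y ∈ Ys, w k * qk k x y)
      = ∑ k ∈ K, ∑ x : α, ∑ y ∈ Ys,
          w k * q x y * (∑ x' : α, qk k x' y) / (∑ x' : α, q x' y) := by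
    rw [reorder, reorder]
    exact Finset.sum_congr rfl fun y hy => key y hy
  have hzero : ∑ k ∈ K, ∑ x : α, ∑ y ∈ Ys,
      ((w k * qk k x y - w k * q x y * (∑ x' : α, qk k x' y) / (∑ x' : α, q x' y)) / Real.log 2)
      = 0 := by
    simp only [← Finset.sum_div, Finset.sum_sub_distrib]
    rw [hS, sub_self, zero_div]
  have expand : ∑ k ∈ K, ∑ x : α, ∑ y ∈ Ys,
      (w k * (qk k x y * Real.logb 2 (qk k x y / (p x * ∑ x' : α, qk k x' y))
            - qk k x y * Real.logb 2 (q x y / (p x * ∑ x' : α, q x' y))))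
      = (∑ k ∈ K, w k * MI (qk k) Ys) - MI q Ys := by
    have split : ∀ k ∈ K, (∑ x : α, ∑ y ∈ Ys,
        (w k * (qk k x y * Real.logb 2 (qk k x y / (p x * ∑ x' : α, qk k x' y))
              - qk k x y * Real.logb 2 (q x y / (p x * ∑ x' : α, q x' y)))))
        = (w k * ∑ x : α, ∑ y ∈ Ys,
            qk k x y * Real.logb 2 (qk k x y / (p x * ∑ x' : α, qk k x' y)))
          - ∑ x : α, ∑ y ∈ Ys,
            (w k * qk k x y) * Real.logb 2 (q x y / (p x * ∑ x' : α, q x' y)) := by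
      intro k hk
      rw [Finset.mul_sum, ← Finset.sum_sub_distrib]
      refine Finset.sum_congr rfl fun x _ => ?_
      rw [Finset.mul_sum, ← Finset.sum_sub_distrib]
      exact Finset.sum_congr rfl fun y _ => by ring
    rw [Finset.sum_congr rfl split, Finset.sum_sub_distrib]
    congr 1
    · exact Finset.sum_congr rfl fun k hk => by rw [hMIqk k hk]
    · rw [hMIq]
      calc ∑ k ∈ K, ∑ x : α, ∑ y ∈ Ys,
            (w k * qk k x y) * Real.logb 2 (q x y / (p x * ∑ x' : α, q x' y))
          = ∑ x : α, ∑ k ∈ K, ∑ y ∈ Ys,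
            (w k * qk k x y) * Real.logb 2 (q x y / (p x * ∑ x' : α, q x' y)) :=
            Finset.sum_comm
        _ = ∑ x : α, ∑ y ∈ Ys, ∑ k ∈ K,
            (w k * qk k x y) * Real.logb 2 (q x y / (p x * ∑ x' : α, q x' y)) :=
            Finset.sum_congr rfl fun x _ => Finset.sum_comm
        _ = ∑ x : α, ∑ y ∈ Ys,
            q x y * Real.logb 2 (q x y / (p x * ∑ x' : α, q x' y)) := by
            refine Finset.sum_congr rfl fun x _ => Finset.sum_congr rfl fun y _ => ?_
            rw [← Finset.sum_mul, ← hqsum]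
  rw [hzero, expand] at main
  linarith

/-- For every `n ≥ 1` and `d ∈ [0,1]`,
`C_n(d) ≤ Σ_{k=1}^n (n choose k) · d^(n−k) · (1−d)^k · C_{n,k}`. -/
theorem Cn_le_sum_Cnk (n : ℕ) (hn : 1 ≤ n) (d : ℝ) (hd₀ : 0 ≤ d) (hd₁ : d ≤ 1) :
    Cdel n d ≤ ∑ k ∈ Finset.Icc 1 n,
      (n.choose k : ℝ) * d ^ (n - k) * (1 - d) ^ k * Cnk n k := by
  have hd1' : (0:ℝ) ≤ 1 - d := by linarith
  have hw0 : ∀ k, 0 ≤ (n.choose k : ℝ) * d ^ (n - k) * (1 - d) ^ k := fun k => by positivity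
  have hwsum : ∑ k ∈ Finset.range (n+1), (n.choose k : ℝ) * d ^ (n - k) * (1 - d) ^ k = 1 := by
    have h := add_pow (1 - d) d n
    have h2 : ((1 - d) + d) ^ n = 1 := by norm_num
    rw [h2] at h
    have h3 : ∑ k ∈ Finset.range (n+1), (n.choose k : ℝ) * d ^ (n - k) * (1 - d) ^ k
        = ∑ m ∈ Finset.range (n+1), (1 - d) ^ m * d ^ (n - m) * (n.choose m : ℝ) :=
      Finset.sum_congr rfl fun k _ => by ring
    rw [h3]
    exact h.symm
  have hBdd : ∀ k, BddAbove { r | ∃ p : (Fin n → Bool) → ℝ, IsDist p ∧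
      r = MI (fun x y => p x * Wnk n k x y) (listsUpTo n) } := by
    intro k
    refine ⟨2 * Fintype.card (Fin n → Bool), ?_⟩
    rintro r ⟨p, hp, rfl⟩
    exact MI_le_bound _ _ (fun x y => mul_nonneg (hp.1 x) (Wnk_nonneg n k x y))
  have hne : ∃ p : (Fin n → Bool) → ℝ, IsDist p := by
    refine ⟨fun x => if x = (fun _ => false) then 1 else 0, fun a => by positivity, ?_⟩
    simp
  unfold Cdel
  apply csSup_le
  · obtain ⟨p, hp⟩ := hne
    exact ⟨_, p, hp, rfl⟩
  · rintro r ⟨p, hp, rfl⟩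
    have hrowk : ∀ k ∈ Finset.range (n+1), ∀ x,
        ∑ y ∈ listsUpTo n, p x * Wnk n k x y = p x := by
      intro k hk x
      rw [← Finset.mul_sum, sum_Wnk (Nat.lt_succ_iff.mp (Finset.mem_range.mp hk)), mul_one]
    have hqsum : ∀ (x : Fin n → Bool) (y : List Bool), p x * Wdel n d x y
        = ∑ k ∈ Finset.range (n+1),
            ((n.choose k : ℝ) * d ^ (n - k) * (1 - d) ^ k) * (p x * Wnk n k x y) := by
      intro x y
      rw [Wdel_eq_sum, Finset.mul_sum]
      exact Finset.sum_congr rfl fun k _ => by ring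
    have hrow : ∀ x, ∑ y ∈ listsUpTo n, p x * Wdel n d x y = p x := by
      intro x
      rw [Finset.sum_congr rfl fun y (_ : y ∈ listsUpTo n) => hqsum x y, Finset.sum_comm]
      calc ∑ k ∈ Finset.range (n+1), ∑ y ∈ listsUpTo n,
            ((n.choose k : ℝ) * d ^ (n - k) * (1 - d) ^ k) * (p x * Wnk n k x y)
          = ∑ k ∈ Finset.range (n+1),
            ((n.choose k : ℝ) * d ^ (n - k) * (1 - d) ^ k) * p x := by
            refine Finset.sum_congr rfl fun k hk => ?_
            rw [← Finset.mul_sum, hrowk k hk]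
        _ = p x := by rw [← Finset.sum_mul, hwsum, one_mul]
    have hgenie := genie (listsUpTo n) (Finset.range (n+1))
      (fun k => (n.choose k : ℝ) * d ^ (n - k) * (1 - d) ^ k) p
      (fun x y => p x * Wdel n d x y) (fun k x y => p x * Wnk n k x y)
      (fun k _ => hw0 k) hp.1
      (fun k _ x y => mul_nonneg (hp.1 x) (Wnk_nonneg n k x y))
      hqsum hrow hrowk
    refine le_trans hgenie ?_
    have hset : Finset.range (n+1) = insert 0 (Finset.Icc 1 n) := by
      ext k
      simp only [Finset.mem_range, Finset.mem_insert, Finset.mem_Icc]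
      omega
    rw [hset, Finset.sum_insert (by simp)]
    rw [MI_k0 n p hp, mul_zero, zero_add]
    refine Finset.sum_le_sum fun k hk => ?_
    apply mul_le_mul_of_nonneg_left _ (hw0 k)
    unfold Cnk
    exact le_csSup (hBdd k) ⟨p, hp, rfl⟩
end

section
/- Let x₁, x₂, y be finite strings (lists) over an alphabet with decidable equality, and let |y| = k. Then the number of occurrences of y as a subsequence of the concatenation x₁ ++ x₂ equals Σ_{j=0}^{k} N(take j of y, x₁)·N(drop j of y, x₂), where N(u, x) denotes the number of occurrences of u as a subsequence of x, i.e., the number of sets of positions in x that spell out u in order (equivalently, the multiplicity of u in the list of all sublists of x, counting one sublist per index set). -/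
private lemma aux_count_map_append {α : Type*} [DecidableEq α] (x₁ y t : List α) :
    List.count y (List.map (· ++ t) x₁.sublists) =
      if t <:+ y then List.count (y.take (y.length - t.length)) x₁.sublists else 0 := by
  by_cases h : t <:+ y
  · rw [if_pos h]
    have hd : y.drop (y.length - t.length) = t := (List.suffix_iff_eq_drop.1 h).symm
    have hy : y = y.take (y.length - t.length) ++ t := by
      conv_lhs => rw [← List.take_append_drop (y.length - t.length) y, hd]
    conv_lhs => rw [hy]
    have := List.count_map_of_injective x₁.sublists (· ++ t)
      (List.append_left_injective t) (y.take (y.length - t.length))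
    have heq : (List.instBEq : BEq (List α)) = instBEqOfDecidableEq :=
      lawful_beq_subsingleton _ _
    rw [heq]
    rw [heq] at this
    exact this
  · rw [if_neg h, List.count_eq_zero]
    intro hmem
    obtain ⟨a, _, rfl⟩ := List.mem_map.1 hmem
    exact h (List.suffix_append a t)

private lemma aux_if_sum {α : Type*} [DecidableEq α] (x₁ y t : List α) :
    (if t <:+ y then List.count (y.take (y.length - t.length)) x₁.sublists else 0) =
      ∑ j ∈ Finset.range (y.length + 1),
        if y.drop j = t then List.count (y.take j) x₁.sublists else 0 := by
  by_cases h : t <:+ y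
  · rw [if_pos h]
    have hlen : t.length ≤ y.length := h.length_le
    have hd : y.drop (y.length - t.length) = t := (List.suffix_iff_eq_drop.1 h).symm
    rw [Finset.sum_eq_single (y.length - t.length)]
    · rw [if_pos hd]
    · intro j hj hne
      rw [if_neg]
      intro hdrop
      apply hne
      have := congrArg List.length hdrop
      simp only [List.length_drop] at this
      have hj' : j < y.length + 1 := Finset.mem_range.1 hj
      omega
    · intro hmem
      exact absurd (Finset.mem_range.2 (by omega)) hmem
  · rw [if_neg h]
    symm
    apply Finset.sum_eq_zero
    intro j _
    rw [if_neg]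
    intro hdrop
    exact h (hdrop ▸ List.drop_suffix j y)

private lemma aux_sum_list {α : Type*} [DecidableEq α] (y : List α) (c : ℕ → ℕ)
    (l : List (List α)) :
    (l.map (fun t => ∑ j ∈ Finset.range (y.length + 1),
        if y.drop j = t then c j else 0)).sum =
      ∑ j ∈ Finset.range (y.length + 1), c j * List.count (y.drop j) l := by
  induction l with
  | nil => simp
  | cons t l ih =>
    simp only [List.map_cons, List.sum_cons, ih]
    rw [← Finset.sum_add_distrib]
    apply Finset.sum_congr rfl
    intro j _
    rw [List.count_cons]
    rcases eq_or_ne (y.drop j) t with h | h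
    · rw [if_pos h, if_pos (by simp [h]), mul_add, mul_one]
      omega
    · rw [if_neg h, if_neg (by simpa using Ne.symm h), mul_add, mul_zero]
      omega

/-- For lists `x₁ x₂ y` over a type with decidable equality, with
`|y| = k`, the number of occurrences of `y` as a subsequence of `x₁ ++ x₂`
(one occurrence per index set, i.e. `List.count y (x₁ ++ x₂).sublists`) equals
`Σ_{j=0}^{k} N(y.take j, x₁) · N(y.drop j, x₂)`. -/
theorem count_subseq_append {α : Type*} [DecidableEq α] (x₁ x₂ y : List α)
    (k : ℕ) (hk : y.length = k) :
    List.count y (x₁ ++ x₂).sublists =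
      ∑ j ∈ Finset.range (k + 1),
        List.count (y.take j) x₁.sublists * List.count (y.drop j) x₂.sublists := by
  subst hk
  rw [List.sublists_append]
  show List.count y (x₂.sublists.flatMap fun t => List.map (· ++ t) x₁.sublists) = _
  rw [List.count_flatMap]
  have : (List.map (List.count y ∘ fun t => List.map (· ++ t) x₁.sublists) x₂.sublists)
      = List.map (fun t => ∑ j ∈ Finset.range (y.length + 1),
          if y.drop j = t then List.count (y.take j) x₁.sublists else 0) x₂.sublists := by
    apply List.map_congr_left
    intro t _
    simp only [Function.comp_apply]
    rw [aux_count_map_append, aux_if_sum]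
  rw [this, aux_sum_list]
end
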